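/- For R' ≥ 0 and c ≥ 0, the symmetric tensor product estimate p_{R',c}(v ∨ w) ≤ p_{R',2^{R'}c}(v) · p_{R',2^{R'}c}(w) holds, where p_{R',c}(v) = Σ_k k!^{R'} c^k p^k(v_k) and p^k is the k-fold projective tensor power of a seminorm p; for R' ≤ 0 the seminorms p_{R',c} are submultiplicative. The scalar core: for nonnegative sequences (a_k),(b_k) with a product sequence satisfying the projective cross-norm inequality p^{j+ℓ}(x∨y) ≤ p^j(x)p^ℓ(y), one has Σ_k k!^{R'} c^k Σ_{j+ℓ=k} p^j(x_j)p^ℓ(y_ℓ) ≤ Σ_j j!^{R'}(2^{R'}c)^j p^j(x_j) · Σ_ℓ ℓ!^{R'}(2^{R'}c)^ℓ p^ℓ(y_ℓ), using (j+ℓ)! ≤ 2^{j+ℓ} j! ℓ!. -/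

import Mathlib

open scoped ENNReal

private lemma ennreal_rpow_anti {x y : ℝ≥0∞} (hx : x ≠ 0) (hxy : x ≤ y) {z : ℝ}
    (hz : z ≤ 0) : y ^ z ≤ x ^ z := by
  have hw : ∀ w : ℝ≥0∞, w ^ z = (w ^ (-z))⁻¹ := fun w => by
    rw [← ENNReal.rpow_neg, neg_neg]
  rw [hw x, hw y]
  exact ENNReal.inv_le_inv.mpr (ENNReal.rpow_le_rpow hxy (neg_nonneg.mpr hz))

private lemma ennreal_cauchy (f g : ℕ → ℝ≥0∞) :
    (∑' n, f n) * (∑' n, g n) = ∑' n, ∑ k ∈ Finset.range (n + 1), f k * g (n - k) := by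
  have h1 : (∑' n, f n) * (∑' n, g n) = ∑' (p : ℕ × ℕ), f p.1 * g p.2 := by
    rw [ENNReal.tsum_prod']
    simp_rw [ENNReal.tsum_mul_left]
    rw [ENNReal.tsum_mul_right]
  rw [h1, ← Finset.HasAntidiagonal.sigmaAntidiagonalEquivProd.tsum_eq (fun p : ℕ × ℕ => f p.1 * g p.2),
    ENNReal.tsum_sigma']
  refine tsum_congr fun n => ?_
  rw [tsum_fintype]
  simp only [Finset.HasAntidiagonal.sigmaAntidiagonalEquivProd, Equiv.coe_fn_mk]
  rw [Finset.sum_coe_sort (Finset.HasAntidiagonal.antidiagonal n) (fun p => f p.1 * g p.2),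
    ← Finset.Nat.sum_antidiagonal_eq_sum_range_succ (fun k l => f k * g l)]

private lemma factorial_le_two_pow_mul (j k : ℕ) (hjk : j ≤ k) :
    k.factorial ≤ 2 ^ k * (j.factorial * (k - j).factorial) := by
  have h1 : k.choose j * (j.factorial * (k - j).factorial) = k.factorial := by
    rw [← mul_assoc]; exact Nat.choose_mul_factorial_mul_factorial hjk
  have h2 : k.choose j ≤ 2 ^ k := by
    calc k.choose j ≤ ∑ i ∈ Finset.range (k + 1), k.choose i :=
          Finset.single_le_sum (fun i _ => Nat.zero_le _)
            (Finset.mem_range.mpr (Nat.lt_succ_of_le hjk))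
      _ = 2 ^ k := Nat.sum_range_choose k
  calc k.factorial = k.choose j * (j.factorial * (k - j).factorial) := h1.symm
    _ ≤ 2 ^ k * (j.factorial * (k - j).factorial) :=
        Nat.mul_le_mul_right _ h2

/-- Continuity of the symmetric tensor product in the `R'`-topology, scalar core:
with `u_j = p^j(x_j)`, `v_ℓ = p^ℓ(y_ℓ)` (so that the projective cross-norm inequality
`p^{j+ℓ}(x∨y) ≤ p^j(x)p^ℓ(y)` has been applied), for `R' ≥ 0`
`Σ_k k!^{R'} c^k Σ_{j+ℓ=k} u_j v_ℓ
  ≤ (Σ_j j!^{R'}(2^{R'}c)^j u_j)·(Σ_ℓ ℓ!^{R'}(2^{R'}c)^ℓ v_ℓ)`,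
i.e. `p_{R',c}(v ∨ w) ≤ p_{R',2^{R'}c}(v)·p_{R',2^{R'}c}(w)`, using
`(j+ℓ)! ≤ 2^{j+ℓ} j! ℓ!`; while for `R' ≤ 0` the seminorms `p_{R',c}` are
submultiplicative. -/
theorem symmetric_product_Rprime_estimate (R' : ℝ) (c : ℝ≥0∞) (u v : ℕ → ℝ≥0∞) :
    (0 ≤ R' →
      ∑' k : ℕ, (k.factorial : ℝ≥0∞) ^ R' * c ^ k *
          ∑ j ∈ Finset.range (k + 1), u j * v (k - j) ≤
        (∑' j : ℕ, (j.factorial : ℝ≥0∞) ^ R' * ((2 : ℝ≥0∞) ^ R' * c) ^ j * u j) *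
          (∑' l : ℕ, (l.factorial : ℝ≥0∞) ^ R' * ((2 : ℝ≥0∞) ^ R' * c) ^ l * v l)) ∧
    (R' ≤ 0 →
      ∑' k : ℕ, (k.factorial : ℝ≥0∞) ^ R' * c ^ k *
          ∑ j ∈ Finset.range (k + 1), u j * v (k - j) ≤
        (∑' j : ℕ, (j.factorial : ℝ≥0∞) ^ R' * c ^ j * u j) *
          (∑' l : ℕ, (l.factorial : ℝ≥0∞) ^ R' * c ^ l * v l)) := by
  constructor
  · intro hR
    rw [ennreal_cauchy]
    refine ENNReal.tsum_le_tsum fun k => ?_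
    rw [Finset.mul_sum]
    refine Finset.sum_le_sum fun j hj => ?_
    have hjk : j ≤ k := Nat.lt_succ_iff.mp (Finset.mem_range.mp hj)
    have hco : (k.factorial : ℝ≥0∞) ^ R' * c ^ k ≤
        ((j.factorial : ℝ≥0∞) ^ R' * ((2 : ℝ≥0∞) ^ R' * c) ^ j) *
          (((k - j).factorial : ℝ≥0∞) ^ R' * ((2 : ℝ≥0∞) ^ R' * c) ^ (k - j)) := by
      have hfac : (k.factorial : ℝ≥0∞) ≤
          (2 : ℝ≥0∞) ^ k * ((j.factorial : ℝ≥0∞) * ((k - j).factorial : ℝ≥0∞)) := by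
        have := factorial_le_two_pow_mul j k hjk
        exact_mod_cast (Nat.cast_le (α := ℝ≥0∞)).mpr this
      have h1 : (k.factorial : ℝ≥0∞) ^ R' ≤
          ((2 : ℝ≥0∞) ^ R') ^ k * ((j.factorial : ℝ≥0∞) ^ R' *
            ((k - j).factorial : ℝ≥0∞) ^ R') := by
        calc (k.factorial : ℝ≥0∞) ^ R'
            ≤ ((2 : ℝ≥0∞) ^ k * ((j.factorial : ℝ≥0∞) * ((k - j).factorial : ℝ≥0∞))) ^ R' :=
              ENNReal.rpow_le_rpow hfac hR
          _ = ((2 : ℝ≥0∞) ^ k) ^ R' * ((j.factorial : ℝ≥0∞) ^ R' *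
              ((k - j).factorial : ℝ≥0∞) ^ R') := by
              rw [ENNReal.mul_rpow_of_nonneg _ _ hR, ENNReal.mul_rpow_of_nonneg _ _ hR]
          _ = ((2 : ℝ≥0∞) ^ R') ^ k * ((j.factorial : ℝ≥0∞) ^ R' *
              ((k - j).factorial : ℝ≥0∞) ^ R') := by
              have h2 : ((2 : ℝ≥0∞) ^ k) ^ R' = ((2 : ℝ≥0∞) ^ R') ^ k := by
                rw [← ENNReal.rpow_natCast 2 k, ← ENNReal.rpow_mul,
                  ← ENNReal.rpow_natCast ((2 : ℝ≥0∞) ^ R') k, ← ENNReal.rpow_mul, mul_comm]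
              rw [h2]
      calc (k.factorial : ℝ≥0∞) ^ R' * c ^ k
          ≤ ((2 : ℝ≥0∞) ^ R') ^ k * ((j.factorial : ℝ≥0∞) ^ R' *
              ((k - j).factorial : ℝ≥0∞) ^ R') * c ^ k :=
            mul_le_mul_left h1 _
        _ = ((j.factorial : ℝ≥0∞) ^ R' * ((2 : ℝ≥0∞) ^ R' * c) ^ j) *
            (((k - j).factorial : ℝ≥0∞) ^ R' * ((2 : ℝ≥0∞) ^ R' * c) ^ (k - j)) := by
            have e1 : ((2 : ℝ≥0∞) ^ R') ^ k = ((2 : ℝ≥0∞) ^ R') ^ j * ((2 : ℝ≥0∞) ^ R') ^ (k - j) := by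
              rw [← pow_add, Nat.add_sub_cancel' hjk]
            have e2 : c ^ k = c ^ j * c ^ (k - j) := by
              rw [← pow_add, Nat.add_sub_cancel' hjk]
            rw [mul_pow, mul_pow, e1, e2]
            ring
    calc (k.factorial : ℝ≥0∞) ^ R' * c ^ k * (u j * v (k - j))
        ≤ ((j.factorial : ℝ≥0∞) ^ R' * ((2 : ℝ≥0∞) ^ R' * c) ^ j) *
            (((k - j).factorial : ℝ≥0∞) ^ R' * ((2 : ℝ≥0∞) ^ R' * c) ^ (k - j)) *
            (u j * v (k - j)) := mul_le_mul_left hco _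
      _ = (j.factorial : ℝ≥0∞) ^ R' * ((2 : ℝ≥0∞) ^ R' * c) ^ j * u j *
          (((k - j).factorial : ℝ≥0∞) ^ R' * ((2 : ℝ≥0∞) ^ R' * c) ^ (k - j) *
            v (k - j)) := by ring
  · intro hR
    rw [ennreal_cauchy]
    refine ENNReal.tsum_le_tsum fun k => ?_
    rw [Finset.mul_sum]
    refine Finset.sum_le_sum fun j hj => ?_
    have hjk : j ≤ k := Nat.lt_succ_iff.mp (Finset.mem_range.mp hj)
    have hco : (k.factorial : ℝ≥0∞) ^ R' ≤
        (j.factorial : ℝ≥0∞) ^ R' * ((k - j).factorial : ℝ≥0∞) ^ R' := by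
      have hle : (j.factorial : ℝ≥0∞) * ((k - j).factorial : ℝ≥0∞) ≤ (k.factorial : ℝ≥0∞) := by
        have : j.factorial * (k - j).factorial ≤ k.factorial :=
          Nat.le_of_dvd k.factorial_pos (Nat.factorial_mul_factorial_dvd_factorial hjk)
        exact_mod_cast (Nat.cast_le (α := ℝ≥0∞)).mpr this
      have hne : (j.factorial : ℝ≥0∞) * ((k - j).factorial : ℝ≥0∞) ≠ 0 :=
        mul_ne_zero (Nat.cast_ne_zero.mpr (Nat.factorial_ne_zero _))
          (Nat.cast_ne_zero.mpr (Nat.factorial_ne_zero _))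
      calc (k.factorial : ℝ≥0∞) ^ R'
          ≤ ((j.factorial : ℝ≥0∞) * ((k - j).factorial : ℝ≥0∞)) ^ R' :=
            ennreal_rpow_anti hne hle hR
        _ = (j.factorial : ℝ≥0∞) ^ R' * ((k - j).factorial : ℝ≥0∞) ^ R' :=
            ENNReal.mul_rpow_of_ne_top (ENNReal.natCast_ne_top _) (ENNReal.natCast_ne_top _) R'
    calc (k.factorial : ℝ≥0∞) ^ R' * c ^ k * (u j * v (k - j))
        ≤ (j.factorial : ℝ≥0∞) ^ R' * ((k - j).factorial : ℝ≥0∞) ^ R' * c ^ k *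
            (u j * v (k - j)) := by
          exact mul_le_mul_left (mul_le_mul_left hco _) _
      _ = (j.factorial : ℝ≥0∞) ^ R' * c ^ j * u j *
          ((k - j).factorial : ℝ≥0∞) ^ R' * c ^ (k - j) * v (k - j) := by
          rw [show c ^ k = c ^ j * c ^ (k - j) by rw [← pow_add, Nat.add_sub_cancel' hjk]]
          ring
      _ = (j.factorial : ℝ≥0∞) ^ R' * c ^ j * u j *
          ((k - j).factorial : ℝ≥0∞) ^ R' * c ^ (k - j) * v (k - j) := rfl
      _ = (j.factorial : ℝ≥0∞) ^ R' * c ^ j * u j *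
          (((k - j).factorial : ℝ≥0∞) ^ R' * c ^ (k - j) * v (k - j)) := by ring
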